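/- Existence of Riemann invariants (Lemma 3.1). There exists a smooth map w = (w₁, w₂) : Ω → ℝ² which is injective on Ω and whose derivative is invertible at every point of Ω (hence w is a diffeomorphism onto its image), such that for all z ∈ Ω: ∇w₁(z) · r₁(z) = 0 and ∇w₂(z) · r₂(z) = 0, and ∂w₁/∂z₁(z) > 0 and ∂w₂/∂z₁(z) < 0. -/

import Mathlib

set_option linter.unusedSectionVars false


/-- The half-plane `Ω = {(z₁,z₂) ∈ ℝ² : z₁ > 0}`. -/
def Omega : Set (ℝ × ℝ) := {z : ℝ × ℝ | 0 < z.1}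

/-- The eigenvalue `λ₁(z₁,z₂) = (z₂ − √(z₂² + 4z₁))/2` of `[[z₂, z₁],[1,0]]`. -/
noncomputable def lam1 (z : ℝ × ℝ) : ℝ := (z.2 - Real.sqrt (z.2 ^ 2 + 4 * z.1)) / 2

/-- The eigenvalue `λ₂(z₁,z₂) = (z₂ + √(z₂² + 4z₁))/2` of `[[z₂, z₁],[1,0]]`. -/
noncomputable def lam2 (z : ℝ × ℝ) : ℝ := (z.2 + Real.sqrt (z.2 ^ 2 + 4 * z.1)) / 2

namespace RInv

noncomputable def S (z : ℝ × ℝ) : ℝ := z.2 ^ 2 + 4 * z.1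
noncomputable def u (z : ℝ × ℝ) : ℝ := Real.sqrt (S z)
noncomputable def A (z : ℝ × ℝ) : ℝ := (u z - z.2) / 2
noncomputable def B (z : ℝ × ℝ) : ℝ := (u z + z.2) / 2
noncomputable def aa (z : ℝ × ℝ) : ℝ := Real.sqrt (A z)
noncomputable def bb (z : ℝ × ℝ) : ℝ := Real.sqrt (B z)
noncomputable def w1 (z : ℝ × ℝ) : ℝ := aa z * B z - (1/3) * (aa z * aa z * aa z)
noncomputable def w2 (z : ℝ × ℝ) : ℝ := (1/3) * (bb z * bb z * bb z) - A z * bb z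

/-- the linear map `(x,y) ↦ p x + q y`. -/
noncomputable def L (p q : ℝ) : ℝ × ℝ →L[ℝ] ℝ :=
  p • (ContinuousLinearMap.fst ℝ ℝ ℝ) + q • (ContinuousLinearMap.snd ℝ ℝ ℝ)

@[simp] lemma L_apply (p q : ℝ) (v : ℝ × ℝ) : L p q v = p * v.1 + q * v.2 := by
  simp [L]

section facts
variable {z : ℝ × ℝ} (hz : z ∈ Omega)
include hz

lemma hS_pos : 0 < S z := by
  have : 0 < z.1 := hz
  have := sq_nonneg z.2
  unfold S; nlinarith

lemma hu_pos : 0 < u z := Real.sqrt_pos.mpr (hS_pos hz)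

lemma hu_sq : u z ^ 2 = S z := Real.sq_sqrt (hS_pos hz).le

lemma hu_gt : z.2 < u z := by
  have h1 : |z.2| < u z := by
    have : |z.2| = Real.sqrt (z.2 ^ 2) := by
      rw [Real.sqrt_sq_eq_abs]
    rw [this]
    apply Real.sqrt_lt_sqrt (sq_nonneg _)
    have : 0 < z.1 := hz
    unfold S; nlinarith
  exact lt_of_le_of_lt (le_abs_self _) h1

lemma hu_gt' : -u z < z.2 := by
  have h1 : |z.2| < u z := by
    have : |z.2| = Real.sqrt (z.2 ^ 2) := by rw [Real.sqrt_sq_eq_abs]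
    rw [this]
    apply Real.sqrt_lt_sqrt (sq_nonneg _)
    have : 0 < z.1 := hz
    unfold S; nlinarith
  have := neg_abs_le z.2
  linarith

lemma hA_pos : 0 < A z := by
  have := hu_gt hz; unfold A; linarith

lemma hB_pos : 0 < B z := by
  have := hu_gt' hz; unfold B; linarith

lemma haa_pos : 0 < aa z := Real.sqrt_pos.mpr (hA_pos hz)
lemma hbb_pos : 0 < bb z := Real.sqrt_pos.mpr (hB_pos hz)
lemma haa_sq : aa z ^ 2 = A z := Real.sq_sqrt (hA_pos hz).le
lemma hbb_sq : bb z ^ 2 = B z := Real.sq_sqrt (hB_pos hz).le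

lemma hAB : A z + B z = u z := by unfold A B; ring

lemma hABmul : A z * B z = z.1 := by
  have h := hu_sq hz
  unfold A B
  unfold S at h
  nlinarith

lemma hBA : B z - A z = z.2 := by unfold A B; ring

/- derivatives -/

lemma hS' : HasFDerivAt S (L 4 (2 * z.2)) z := by
  have h1 : HasFDerivAt (fun z : ℝ × ℝ => z.1) (ContinuousLinearMap.fst ℝ ℝ ℝ) z :=
    hasFDerivAt_fst
  have h2 : HasFDerivAt (fun z : ℝ × ℝ => z.2) (ContinuousLinearMap.snd ℝ ℝ ℝ) z :=
    hasFDerivAt_snd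
  have := ((h2.mul h2).add (h1.const_mul 4))
  have hfun : S = ((fun z : ℝ × ℝ => z.2) * fun z => z.2) + fun y => 4 * y.1 := by
    funext y; show S y = y.2 * y.2 + 4 * y.1; unfold S; ring
  rw [hfun]; refine this.congr_fderiv (Eq.symm ?_)
  · refine ContinuousLinearMap.ext fun v => ?_
    simp [L]
    ring

lemma hu' : HasFDerivAt u (L (2 / u z) (z.2 / u z)) z := by
  have h := (Real.hasDerivAt_sqrt (hS_pos hz).ne').comp_hasFDerivAt z (hS' hz)
  refine h.congr_fderiv (Eq.symm ?_)
  refine ContinuousLinearMap.ext fun v => ?_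
  have h0 : u z ≠ 0 := (hu_pos hz).ne'
  simp only [L_apply, ContinuousLinearMap.coe_smul', Pi.smul_apply, smul_eq_mul]
  show 2 / u z * v.1 + z.2 / u z * v.2 = 1 / (2 * u z) * (4 * v.1 + 2 * z.2 * v.2)
  field_simp
  ring

lemma hA' : HasFDerivAt A (L (1 / u z) (-(A z) / u z)) z := by
  have hfun : A = fun x : ℝ × ℝ => (u x - x.2) * (1/2) := by
    funext x; unfold A; ring
  rw [hfun]
  refine HasFDerivAt.congr_fderiv (((hu' hz).sub hasFDerivAt_snd).mul_const (1/2 : ℝ)) ?_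
  refine ContinuousLinearMap.ext fun v => ?_
  have h0 : u z ≠ 0 := (hu_pos hz).ne'
  have hA2 : A z = (u z - z.2) / 2 := rfl
  simp [L]
  field_simp
  ring

lemma hB' : HasFDerivAt B (L (1 / u z) (B z / u z)) z := by
  have hfun : B = fun x : ℝ × ℝ => (u x + x.2) * (1/2) := by
    funext x; unfold B; ring
  rw [hfun]
  refine HasFDerivAt.congr_fderiv (((hu' hz).add hasFDerivAt_snd).mul_const (1/2 : ℝ)) ?_
  refine ContinuousLinearMap.ext fun v => ?_
  have h0 : u z ≠ 0 := (hu_pos hz).ne'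
  have hB2 : B z = (u z + z.2) / 2 := rfl
  simp [L]
  field_simp
  ring

lemma haa' : HasFDerivAt aa (L (1 / (2 * aa z * u z)) (-(aa z) / (2 * u z))) z := by
  have h := (Real.hasDerivAt_sqrt (hA_pos hz).ne').comp_hasFDerivAt z (hA' hz)
  refine h.congr_fderiv (Eq.symm ?_)
  refine ContinuousLinearMap.ext fun v => ?_
  have h0 : u z ≠ 0 := (hu_pos hz).ne'
  have ha0 : aa z ≠ 0 := (haa_pos hz).ne'
  have hsq : aa z * aa z = A z := by
    have := haa_sq hz; nlinarith [this]
  simp only [L_apply, ContinuousLinearMap.coe_smul', Pi.smul_apply, smul_eq_mul]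
  show 1 / (2 * aa z * u z) * v.1 + -(aa z) / (2 * u z) * v.2
      = 1 / (2 * Real.sqrt (A z)) * (1 / u z * v.1 + -(A z) / u z * v.2)
  have : Real.sqrt (A z) = aa z := rfl
  rw [this, ← hsq]
  field_simp

lemma hbb' : HasFDerivAt bb (L (1 / (2 * bb z * u z)) (bb z / (2 * u z))) z := by
  have h := (Real.hasDerivAt_sqrt (hB_pos hz).ne').comp_hasFDerivAt z (hB' hz)
  refine h.congr_fderiv (Eq.symm ?_)
  refine ContinuousLinearMap.ext fun v => ?_
  have h0 : u z ≠ 0 := (hu_pos hz).ne'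
  have hb0 : bb z ≠ 0 := (hbb_pos hz).ne'
  have hsq : bb z * bb z = B z := by
    have := hbb_sq hz; nlinarith [this]
  simp only [L_apply, ContinuousLinearMap.coe_smul', Pi.smul_apply, smul_eq_mul]
  show 1 / (2 * bb z * u z) * v.1 + bb z / (2 * u z) * v.2
      = 1 / (2 * Real.sqrt (B z)) * (1 / u z * v.1 + B z / u z * v.2)
  have : Real.sqrt (B z) = bb z := rfl
  rw [this, ← hsq]
  field_simp

lemma hw1' : HasFDerivAt w1 (L (1 / (2 * aa z)) (aa z / 2)) z := by
  unfold w1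
  refine HasFDerivAt.congr_fderiv (((haa' hz).mul (hB' hz)).sub
    ((((haa' hz).mul (haa' hz)).mul (haa' hz)).const_mul (1/3 : ℝ))) ?_
  refine ContinuousLinearMap.ext fun v => ?_
  have h0 : u z ≠ 0 := (hu_pos hz).ne'
  have ha0 : aa z ≠ 0 := (haa_pos hz).ne'
  have hsq : aa z * aa z = A z := by have := haa_sq hz; nlinarith [this]
  have hUAB : u z = aa z * aa z + B z := by rw [hsq]; exact (hAB hz).symm
  have hden : aa z * aa z + B z ≠ 0 := by rw [← hUAB]; exact h0
  simp [L]
  rw [hUAB]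
  have hden' : aa z ^ 2 + B z ≠ 0 := by rw [sq]; exact hden
  field_simp
  ring

lemma hw2' : HasFDerivAt w2 (L (-(1 / (2 * bb z))) (bb z / 2)) z := by
  unfold w2
  refine HasFDerivAt.congr_fderiv ((((((hbb' hz).mul (hbb' hz)).mul (hbb' hz)).const_mul
    (1/3 : ℝ))).sub ((hA' hz).mul (hbb' hz))) ?_
  refine ContinuousLinearMap.ext fun v => ?_
  have h0 : u z ≠ 0 := (hu_pos hz).ne'
  have hb0 : bb z ≠ 0 := (hbb_pos hz).ne'
  have hsq : bb z * bb z = B z := by have := hbb_sq hz; nlinarith [this]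
  have hUAB : u z = A z + bb z * bb z := by rw [hsq]; exact (hAB hz).symm
  have hden : A z + bb z * bb z ≠ 0 := by rw [← hUAB]; exact h0
  simp [L]
  rw [hUAB]
  have hden' : A z + bb z ^ 2 ≠ 0 := by rw [sq]; exact hden
  field_simp
  ring

lemma hlam1 : lam1 z = -(A z) := by
  unfold lam1 A u S; ring

lemma hlam2 : lam2 z = B z := by
  unfold lam2 B u S; ring

end facts

/- smoothness -/

lemma hOpen : IsOpen Omega := isOpen_lt continuous_const continuous_fst

lemma contDiffAt_S {z : ℝ × ℝ} : ContDiffAt ℝ (⊤ : ℕ∞) S z := by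
  have : ContDiff ℝ (⊤ : ℕ∞) S := by
    unfold S
    exact (contDiff_snd.pow 2).add (contDiff_const.mul contDiff_fst)
  exact this.contDiffAt

lemma contDiffAt_u {z : ℝ × ℝ} (hz : z ∈ Omega) : ContDiffAt ℝ (⊤ : ℕ∞) u z :=
  (Real.contDiffAt_sqrt (hS_pos hz).ne').comp z contDiffAt_S

lemma contDiffAt_A {z : ℝ × ℝ} (hz : z ∈ Omega) : ContDiffAt ℝ (⊤ : ℕ∞) A z := by
  unfold A
  exact ((contDiffAt_u hz).sub contDiffAt_snd).div_const 2

lemma contDiffAt_B {z : ℝ × ℝ} (hz : z ∈ Omega) : ContDiffAt ℝ (⊤ : ℕ∞) B z := by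
  unfold B
  exact ((contDiffAt_u hz).add contDiffAt_snd).div_const 2

lemma contDiffAt_aa {z : ℝ × ℝ} (hz : z ∈ Omega) : ContDiffAt ℝ (⊤ : ℕ∞) aa z :=
  (Real.contDiffAt_sqrt (hA_pos hz).ne').comp z (contDiffAt_A hz)

lemma contDiffAt_bb {z : ℝ × ℝ} (hz : z ∈ Omega) : ContDiffAt ℝ (⊤ : ℕ∞) bb z :=
  (Real.contDiffAt_sqrt (hB_pos hz).ne').comp z (contDiffAt_B hz)

lemma contDiffOn_w1 : ContDiffOn ℝ (⊤ : ℕ∞) w1 Omega := fun z hz => by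
  have : ContDiffAt ℝ (⊤ : ℕ∞) w1 z := by
    unfold w1
    exact ((contDiffAt_aa hz).mul (contDiffAt_B hz)).sub
      (contDiffAt_const.mul (((contDiffAt_aa hz).mul (contDiffAt_aa hz)).mul (contDiffAt_aa hz)))
  exact this.contDiffWithinAt

lemma contDiffOn_w2 : ContDiffOn ℝ (⊤ : ℕ∞) w2 Omega := fun z hz => by
  have : ContDiffAt ℝ (⊤ : ℕ∞) w2 z := by
    unfold w2
    exact (contDiffAt_const.mul (((contDiffAt_bb hz).mul (contDiffAt_bb hz)).mul
      (contDiffAt_bb hz))).sub ((contDiffAt_A hz).mul (contDiffAt_bb hz))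
  exact this.contDiffWithinAt

/- injectivity: the cube map on the first quadrant -/

lemma cube_inj {a b a' b' : ℝ} (ha : 0 < a) (hb : 0 < b) (ha' : 0 < a') (hb' : 0 < b')
    (h1 : a * b^2 - a^3/3 = a' * b'^2 - a'^3/3)
    (h2 : b^3/3 - a^2*b = b'^3/3 - a'^2*b') : a = a' ∧ b = b' := by
  set ζ : ℂ := (b : ℂ) + (a : ℂ) * Complex.I with hζ
  set η : ℂ := (b' : ℂ) + (a' : ℂ) * Complex.I with hη
  have hcube : ζ ^ 3 = η ^ 3 := by
    have e1 : ζ ^ 3 = ((3 * (b^3/3 - a^2*b) : ℝ) : ℂ) + ((3 * (a * b^2 - a^3/3) : ℝ) : ℂ) * Complex.I := by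
      rw [hζ]; push_cast
      linear_combination (3*(b:ℂ)*(a:ℂ)^2 + (a:ℂ)^3*Complex.I) * Complex.I_sq
    have e2 : η ^ 3 = ((3 * (b'^3/3 - a'^2*b') : ℝ) : ℂ) + ((3 * (a' * b'^2 - a'^3/3) : ℝ) : ℂ) * Complex.I := by
      rw [hη]; push_cast
      linear_combination (3*(b':ℂ)*(a':ℂ)^2 + (a':ℂ)^3*Complex.I) * Complex.I_sq
    rw [e1, e2, h1, h2]
  have hfactor : (ζ - η) * ((2*ζ + η - (Real.sqrt 3 : ℂ) * Complex.I * η) *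
      (2*ζ + η + (Real.sqrt 3 : ℂ) * Complex.I * η)) = 0 := by
    have hs3 : ((Real.sqrt 3 : ℂ))^2 = 3 := by
      norm_cast
      rw [Real.sq_sqrt]; norm_num
    have : (ζ - η) * ((2*ζ + η - (Real.sqrt 3 : ℂ) * Complex.I * η) *
        (2*ζ + η + (Real.sqrt 3 : ℂ) * Complex.I * η))
        = (ζ - η) * ((2*ζ+η)^2 - ((Real.sqrt 3 : ℂ))^2 * Complex.I^2 * η^2) := by ring
    rw [this, hs3, Complex.I_sq]
    have : (ζ - η) * ((2*ζ+η)^2 - 3 * (-1) * η^2) = 4 * (ζ^3 - η^3) := by ring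
    rw [this, hcube]; ring
  have hs3pos : 0 < Real.sqrt 3 := Real.sqrt_pos.mpr (by norm_num)
  rcases mul_eq_zero.mp hfactor with h | h
  · have : ζ = η := sub_eq_zero.mp h
    rw [hζ, hη] at this
    have hre := congrArg Complex.re this
    have him := congrArg Complex.im this
    simp at hre him
    exact ⟨him, hre⟩
  · exfalso
    rcases mul_eq_zero.mp h with h' | h'
    · -- 2ζ + η = √3 I η ; real parts: 2b + b' = -√3 a' < 0
      have := congrArg Complex.re (sub_eq_zero.mp h')
      simp [hζ, hη, Complex.add_re, Complex.mul_re] at this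
      nlinarith
    · -- 2ζ + η = -√3 I η ; imaginary parts: 2a + a' = -√3 b' < 0
      have h'' : 2*ζ + η = -((Real.sqrt 3 : ℂ) * Complex.I * η) := by
        have := h'
        linear_combination this
      have := congrArg Complex.im h''
      simp [hζ, hη, Complex.add_im, Complex.mul_im, Complex.mul_re] at this
      nlinarith

lemma inj_w : Set.InjOn (fun z => (w1 z, w2 z)) Omega := by
  intro z hz z' hz' h
  have h1 : w1 z = w1 z' := congrArg Prod.fst h
  have h2 : w2 z = w2 z' := congrArg Prod.snd h
  have hab : aa z = aa z' ∧ bb z = bb z' := by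
    apply cube_inj (haa_pos hz) (hbb_pos hz) (haa_pos hz') (hbb_pos hz')
    · have e : ∀ y ∈ Omega, w1 y = aa y * (bb y)^2 - (aa y)^3/3 := by
        intro y hy
        unfold w1
        rw [hbb_sq hy]; ring
      rw [← e z hz, ← e z' hz', h1]
    · have e : ∀ y ∈ Omega, w2 y = (bb y)^3/3 - (aa y)^2 * bb y := by
        intro y hy
        unfold w2
        rw [haa_sq hy]; ring
      rw [← e z hz, ← e z' hz', h2]
  have hA : A z = A z' := by rw [← haa_sq hz, ← haa_sq hz', hab.1]
  have hB : B z = B z' := by rw [← hbb_sq hz, ← hbb_sq hz', hab.2]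
  have e1 : z.1 = z'.1 := by rw [← hABmul hz, ← hABmul hz', hA, hB]
  have e2 : z.2 = z'.2 := by rw [← hBA hz, ← hBA hz', hA, hB]
  exact Prod.ext e1 e2

end RInv

theorem riemann_invariants_exist :
    ∃ w₁ w₂ : ℝ × ℝ → ℝ,
      ContDiffOn ℝ (⊤ : ℕ∞) w₁ Omega ∧ ContDiffOn ℝ (⊤ : ℕ∞) w₂ Omega ∧
      Set.InjOn (fun z => (w₁ z, w₂ z)) Omega ∧
      (∀ z ∈ Omega, Function.Bijective (fderiv ℝ (fun y => (w₁ y, w₂ y)) z)) ∧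
      (∀ z ∈ Omega,
        fderiv ℝ w₁ z (lam1 z, 1) = 0 ∧
        fderiv ℝ w₂ z (lam2 z, 1) = 0 ∧
        0 < fderiv ℝ w₁ z ((1 : ℝ), (0 : ℝ)) ∧
        fderiv ℝ w₂ z ((1 : ℝ), (0 : ℝ)) < 0) := by
  classical
  refine ⟨RInv.w1, RInv.w2, RInv.contDiffOn_w1, RInv.contDiffOn_w2, RInv.inj_w, ?_, ?_⟩
  · intro z hz
    have hpair : HasFDerivAt (fun y => (RInv.w1 y, RInv.w2 y))
        ((RInv.L (1 / (2 * RInv.aa z)) (RInv.aa z / 2)).prod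
          (RInv.L (-(1 / (2 * RInv.bb z))) (RInv.bb z / 2))) z :=
      (RInv.hw1' hz).prodMk (RInv.hw2' hz)
    rw [hpair.fderiv]
    set a := RInv.aa z with ha
    set b := RInv.bb z with hb
    have ha0 : 0 < a := RInv.haa_pos hz
    have hb0 : 0 < b := RInv.hbb_pos hz
    set Δ : ℝ := (1 / (2*a)) * (b/2) + (a/2) * (1/(2*b)) with hΔ
    have hΔ0 : Δ ≠ 0 := by
      have : 0 < Δ := by rw [hΔ]; positivity
      exact this.ne'
    rw [Function.bijective_iff_has_inverse]
    refine ⟨fun p => (((b/2) * p.1 - (a/2) * p.2) / Δ,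
        ((1/(2*b)) * p.1 + (1/(2*a)) * p.2) / Δ), ?_, ?_⟩
    · intro v
      simp only [ContinuousLinearMap.prod_apply, RInv.L_apply]
      have h1 : ((b/2) * ((1 / (2*a)) * v.1 + (a/2) * v.2)
          - (a/2) * ((-(1 / (2*b))) * v.1 + (b/2) * v.2)) / Δ = v.1 := by
        rw [hΔ]; field_simp; ring
      have h2 : ((1/(2*b)) * ((1 / (2*a)) * v.1 + (a/2) * v.2)
          + (1/(2*a)) * ((-(1 / (2*b))) * v.1 + (b/2) * v.2)) / Δ = v.2 := by
        rw [hΔ]; field_simp; ring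
      exact Prod.ext h1 h2
    · intro p
      simp only [ContinuousLinearMap.prod_apply, RInv.L_apply]
      have h1 : (1 / (2*a)) * (((b/2) * p.1 - (a/2) * p.2) / Δ)
          + (a/2) * (((1/(2*b)) * p.1 + (1/(2*a)) * p.2) / Δ) = p.1 := by
        rw [hΔ]; field_simp; ring
      have h2 : (-(1 / (2*b))) * (((b/2) * p.1 - (a/2) * p.2) / Δ)
          + (b/2) * (((1/(2*b)) * p.1 + (1/(2*a)) * p.2) / Δ) = p.2 := by
        rw [hΔ]; field_simp; ring
      exact Prod.ext h1 h2
  · intro z hz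
    have ha0 : 0 < RInv.aa z := RInv.haa_pos hz
    have hb0 : 0 < RInv.bb z := RInv.hbb_pos hz
    rw [(RInv.hw1' hz).fderiv, (RInv.hw2' hz).fderiv]
    refine ⟨?_, ?_, ?_, ?_⟩
    · simp only [RInv.L_apply]
      rw [RInv.hlam1 hz, ← RInv.haa_sq hz]
      field_simp
      ring
    · simp only [RInv.L_apply]
      rw [RInv.hlam2 hz, ← RInv.hbb_sq hz]
      field_simp
      ring
    · simp only [RInv.L_apply]
      have : (0:ℝ) < 1 / (2 * RInv.aa z) := by positivity
      linarith [this]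
    · simp only [RInv.L_apply]
      have : (0:ℝ) < 1 / (2 * RInv.bb z) := by positivity
      linarith [this]
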